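/- Let g : ℝ≥0 → ℝ≥0 be non-decreasing and subadditive with g(0) ≥ 0, and let w_a, w_o, w_j ≥ 0. Then ∫_{w_a}^{w_a+w_j} g(x) dx − ∫_{max(w_a−w_o−w_j,0)}^{max(w_a−w_o,0)} g(x) dx ≤ 2 ∫_0^{w_j} g(w_o + x) dx. -/

import Mathlib

open intervalIntegral MeasureTheory

theorem stmt_3 (g : ℝ → ℝ)
    (hnonneg : ∀ x : ℝ, 0 ≤ x → 0 ≤ g x)
    (hmono : MonotoneOn g (Set.Ici 0))
    (hsub : ∀ x y : ℝ, 0 ≤ x → 0 ≤ y → g (x + y) ≤ g x + g y)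
    (h0 : 0 ≤ g 0)
    (w_a w_o w_j : ℝ) (hwa : 0 ≤ w_a) (hwo : 0 ≤ w_o) (hwj : 0 ≤ w_j) :
    (∫ x in w_a..(w_a + w_j), g x) -
      (∫ x in (max (w_a - w_o - w_j) 0)..(max (w_a - w_o) 0), g x) ≤
        2 * ∫ x in (0:ℝ)..w_j, g (w_o + x) := by
  -- integrability of g on intervals in [0,∞)
  have hIg : ∀ c d : ℝ, 0 ≤ c → 0 ≤ d → IntervalIntegrable g volume c d := by
    intro c d hc hd
    apply MonotoneOn.intervalIntegrable
    apply hmono.mono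
    intro x hx
    rw [Set.uIcc, Set.mem_Icc] at hx
    have : (0:ℝ) ≤ c ⊓ d := le_inf hc hd
    exact Set.mem_Ici.2 (le_trans this hx.1)
  -- integrability of x ↦ g (c + x) on [0, w_j]
  have hIc : ∀ c : ℝ, 0 ≤ c → IntervalIntegrable (fun x => g (c + x)) volume 0 w_j := by
    intro c hc
    apply MonotoneOn.intervalIntegrable
    intro x hx y hy hxy
    rw [Set.uIcc_of_le hwj, Set.mem_Icc] at hx hy
    exact hmono (Set.mem_Ici.2 (by linarith [hx.1])) (Set.mem_Ici.2 (by linarith [hy.1]))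
      (by linarith)
  have hIc2 : ∀ e c d : ℝ, 0 ≤ e → 0 ≤ c → 0 ≤ d →
      IntervalIntegrable (fun x => g (e + x)) volume c d := by
    intro e c d he hc hd
    apply MonotoneOn.intervalIntegrable
    intro x hx y hy hxy
    rw [Set.uIcc, Set.mem_Icc] at hx hy
    have h0cd : (0:ℝ) ≤ c ⊓ d := le_inf hc hd
    exact hmono (Set.mem_Ici.2 (by linarith [hx.1])) (Set.mem_Ici.2 (by linarith [hy.1]))
      (by linarith)
  -- integrability of x ↦ g (w_j - x) on [0, w_j]
  have hIr : IntervalIntegrable (fun x => g (w_j - x)) volume 0 w_j := by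
    apply AntitoneOn.intervalIntegrable
    intro x hx y hy hxy
    rw [Set.uIcc_of_le hwj, Set.mem_Icc] at hx hy
    exact hmono (Set.mem_Ici.2 (by linarith [hy.2])) (Set.mem_Ici.2 (by linarith [hx.2]))
      (by linarith)
  -- the reflected integral
  have hrefl : (∫ x in (0:ℝ)..w_j, g (w_j - x)) = ∫ x in (0:ℝ)..w_j, g x := by
    rw [intervalIntegral.integral_comp_sub_left g w_j]
    norm_num
  -- ∫ g ≤ ∫ g (w_o + ·)
  have hshift : (∫ x in (0:ℝ)..w_j, g x) ≤ ∫ x in (0:ℝ)..w_j, g (w_o + x) := by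
    apply intervalIntegral.integral_mono_on hwj (hIg 0 w_j le_rfl hwj) (hIc w_o hwo)
    intro x hx
    rw [Set.mem_Icc] at hx
    exact hmono (Set.mem_Ici.2 hx.1) (Set.mem_Ici.2 (by linarith [hx.1])) (by linarith [hx.1])
  -- key : w_j * g (w_o + w_j) ≤ 2 * ∫
  have key : w_j * g (w_o + w_j) ≤ 2 * ∫ x in (0:ℝ)..w_j, g (w_o + x) := by
    have h1 : (∫ _x in (0:ℝ)..w_j, g (w_o + w_j)) = w_j * g (w_o + w_j) := by
      rw [intervalIntegral.integral_const]; simp [smul_eq_mul]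
    have h2 : (∫ _x in (0:ℝ)..w_j, g (w_o + w_j)) ≤
        ∫ x in (0:ℝ)..w_j, (g (w_o + x) + g (w_j - x)) := by
      apply intervalIntegral.integral_mono_on hwj intervalIntegrable_const
        ((hIc w_o hwo).add hIr)
      intro x hx
      rw [Set.mem_Icc] at hx
      have := hsub (w_o + x) (w_j - x) (by linarith [hx.1]) (by linarith [hx.2])
      calc g (w_o + w_j) = g ((w_o + x) + (w_j - x)) := by ring_nf
        _ ≤ g (w_o + x) + g (w_j - x) := this
    rw [intervalIntegral.integral_add (hIc w_o hwo) hIr, hrefl] at h2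
    linarith
  have hint : (0:ℝ) ≤ ∫ x in (0:ℝ)..w_j, g (w_o + x) := by
    apply intervalIntegral.integral_nonneg hwj
    intro x hx
    exact hnonneg _ (by linarith [hx.1])
  -- first integral as a shifted integral
  have hA : (∫ x in w_a..(w_a + w_j), g x) = ∫ x in (0:ℝ)..w_j, g (w_a + x) := by
    rw [intervalIntegral.integral_comp_add_left g w_a]
    norm_num
  rcases le_or_gt (w_a - w_o) 0 with hb | hb
  · -- case w_a ≤ w_o : second integral vanishes
    have e1 : max (w_a - w_o - w_j) 0 = 0 := max_eq_right (by linarith)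
    have e2 : max (w_a - w_o) 0 = 0 := max_eq_right hb
    rw [e1, e2, intervalIntegral.integral_same, hA, sub_zero]
    have : (∫ x in (0:ℝ)..w_j, g (w_a + x)) ≤ ∫ x in (0:ℝ)..w_j, g (w_o + x) := by
      apply intervalIntegral.integral_mono_on hwj (hIc w_a hwa) (hIc w_o hwo)
      intro x hx
      rw [Set.mem_Icc] at hx
      exact hmono (Set.mem_Ici.2 (by linarith [hx.1])) (Set.mem_Ici.2 (by linarith [hx.1]))
        (by linarith)
    linarith
  · rcases le_or_gt (w_a - w_o - w_j) 0 with ha | ha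
    · -- case w_o < w_a ≤ w_o + w_j
      have e1 : max (w_a - w_o - w_j) 0 = 0 := max_eq_right ha
      have e2 : max (w_a - w_o) 0 = w_a - w_o := max_eq_left (le_of_lt hb)
      set t : ℝ := w_o + w_j - w_a with ht
      have ht0 : 0 ≤ t := by simp [ht]; linarith
      have htj : t ≤ w_j := by simp [ht]; linarith
      rw [e1, e2, hA]
      have hsplit : (∫ x in (0:ℝ)..w_j, g (w_a + x)) =
          (∫ x in (0:ℝ)..t, g (w_a + x)) + ∫ x in t..w_j, g (w_a + x) := by
        rw [intervalIntegral.integral_add_adjacent_intervals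
          (hIc2 w_a 0 t hwa le_rfl ht0) (hIc2 w_a t w_j hwa ht0 hwj)]
      have h1 : (∫ x in (0:ℝ)..t, g (w_a + x)) ≤ t * g (w_o + w_j) := by
        have : (∫ x in (0:ℝ)..t, g (w_a + x)) ≤ ∫ _x in (0:ℝ)..t, g (w_o + w_j) := by
          apply intervalIntegral.integral_mono_on ht0 (hIc2 w_a 0 t hwa le_rfl ht0)
            intervalIntegrable_const
          intro x hx
          rw [Set.mem_Icc] at hx
          exact hmono (Set.mem_Ici.2 (by linarith [hx.1])) (Set.mem_Ici.2 (by linarith))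
            (by simp [ht] at hx ⊢; linarith [hx.2])
        rw [intervalIntegral.integral_const] at this
        simpa [smul_eq_mul] using this
      have h2 : (∫ x in t..w_j, g (w_a + x)) ≤
          (∫ x in t..w_j, g (x - t)) + (w_j - t) * g (w_o + w_j) := by
        have hI1 : IntervalIntegrable (fun x => g (x - t)) volume t w_j := by
          apply MonotoneOn.intervalIntegrable
          intro x hx y hy hxy
          rw [Set.uIcc_of_le htj, Set.mem_Icc] at hx hy
          exact hmono (Set.mem_Ici.2 (by linarith [hx.1])) (Set.mem_Ici.2 (by linarith [hy.1]))
            (by linarith)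
        have : (∫ x in t..w_j, g (w_a + x)) ≤
            ∫ x in t..w_j, (g (x - t) + g (w_o + w_j)) := by
          apply intervalIntegral.integral_mono_on htj (hIc2 w_a t w_j hwa ht0 hwj)
            (hI1.add intervalIntegrable_const)
          intro x hx
          rw [Set.mem_Icc] at hx
          have := hsub (x - t) (w_o + w_j) (by linarith [hx.1]) (by linarith)
          calc g (w_a + x) = g ((x - t) + (w_o + w_j)) := by simp [ht]; ring_nf
            _ ≤ g (x - t) + g (w_o + w_j) := this
        rw [intervalIntegral.integral_add hI1 intervalIntegrable_const,
          intervalIntegral.integral_const] at this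
        simpa [smul_eq_mul] using this
      have h3 : (∫ x in t..w_j, g (x - t)) = ∫ x in (0:ℝ)..(w_a - w_o), g x := by
        have := intervalIntegral.integral_comp_sub_right g t (a := t) (b := w_j)
        rw [this]
        have e : t - t = (0:ℝ) := sub_self t
        rw [e]
        congr 1
        simp [ht]
        ring
      have h4 : t * g (w_o + w_j) + (w_j - t) * g (w_o + w_j) = w_j * g (w_o + w_j) := by ring
      linarith
    · -- case w_a > w_o + w_j
      have e1 : max (w_a - w_o - w_j) 0 = w_a - w_o - w_j := max_eq_left (le_of_lt ha)
      have e2 : max (w_a - w_o) 0 = w_a - w_o := max_eq_left (le_of_lt hb)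
      rw [e1, e2, hA]
      set a : ℝ := w_a - w_o - w_j with hadef
      have ha0 : 0 ≤ a := le_of_lt ha
      have h1 : (∫ x in (0:ℝ)..w_j, g (w_a + x)) ≤
          (∫ x in (0:ℝ)..w_j, g (a + x)) + w_j * g (w_o + w_j) := by
        have : (∫ x in (0:ℝ)..w_j, g (w_a + x)) ≤
            ∫ x in (0:ℝ)..w_j, (g (a + x) + g (w_o + w_j)) := by
          apply intervalIntegral.integral_mono_on hwj (hIc w_a hwa)
            ((hIc a ha0).add intervalIntegrable_const)
          intro x hx
          rw [Set.mem_Icc] at hx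
          have := hsub (a + x) (w_o + w_j) (by linarith [hx.1]) (by linarith)
          calc g (w_a + x) = g ((a + x) + (w_o + w_j)) := by simp [hadef]; ring_nf
            _ ≤ g (a + x) + g (w_o + w_j) := this
        rw [intervalIntegral.integral_add (hIc a ha0) intervalIntegrable_const,
          intervalIntegral.integral_const] at this
        simpa [smul_eq_mul] using this
      have h2 : (∫ x in (0:ℝ)..w_j, g (a + x)) = ∫ x in (w_a - w_o - w_j)..(w_a - w_o), g x := by
        rw [intervalIntegral.integral_comp_add_left g a]
        norm_num [hadef]
      linarith
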